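/- Let X be a real symmetric positive definite n×n matrix. Then the improper integral ∫₀^∞ (X + τIₙ)^{−1} (log X) (X + τIₙ)^{−1} dτ converges and equals X^{−1} log X, which also equals (log X) X^{−1}. -/

import Mathlib

open Matrix MeasureTheory

attribute [local instance] Matrix.normedAddCommGroup Matrix.normedSpace

/-- Apply a scalar function to a real symmetric matrix via its spectral decomposition
(functional calculus); defined to be `0` on non-symmetric matrices. -/
noncomputable def matFun {n : ℕ} (f : ℝ → ℝ) (A : Matrix (Fin n) (Fin n) ℝ) :
    Matrix (Fin n) (Fin n) ℝ :=
  if hA : A.IsHermitian then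
    (hA.eigenvectorUnitary : Matrix (Fin n) (Fin n) ℝ) * Matrix.diagonal (f ∘ hA.eigenvalues)
      * (star (hA.eigenvectorUnitary : Matrix (Fin n) (Fin n) ℝ))
  else 0

/-- The principal matrix logarithm of a real symmetric (positive definite) matrix, obtained by
applying `Real.log` to the eigenvalues in a spectral decomposition. -/
noncomputable def matLog {n : ℕ} (A : Matrix (Fin n) (Fin n) ℝ) : Matrix (Fin n) (Fin n) ℝ :=
  matFun Real.log A

lemma scalar_int {a : ℝ} (ha : 0 < a) :
    IntegrableOn (fun τ : ℝ => (a + τ)⁻¹ * (a + τ)⁻¹) (Set.Ioi 0) volume ∧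
    ∫ τ in Set.Ioi (0 : ℝ), (a + τ)⁻¹ * (a + τ)⁻¹ = a⁻¹ := by
  have hd : ∀ x ∈ Set.Ici (0:ℝ), HasDerivAt (fun τ : ℝ => -(a + τ)⁻¹)
      ((a + x)⁻¹ * (a + x)⁻¹) x := by
    intro x hx
    have hx0 : (0:ℝ) ≤ x := hx
    have hax : a + x ≠ 0 := by positivity
    have h1 : HasDerivAt (fun τ : ℝ => a + τ) 1 x := (hasDerivAt_id x).const_add a
    have h2 := (h1.inv hax).neg
    have h3 : HasDerivAt (fun τ : ℝ => -(a + τ)⁻¹) (-(-1 / (a + x) ^ 2)) x := h2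
    convert h3 using 1
    field_simp
  have hpos : ∀ x ∈ Set.Ioi (0:ℝ), 0 ≤ (a + x)⁻¹ * (a + x)⁻¹ :=
    fun x _ => mul_self_nonneg _
  have ht : Filter.Tendsto (fun τ : ℝ => -(a + τ)⁻¹) Filter.atTop (nhds 0) := by
    have : Filter.Tendsto (fun τ : ℝ => a + τ) Filter.atTop Filter.atTop :=
      Filter.tendsto_atTop_add_const_left _ a Filter.tendsto_id
    simpa using (this.inv_tendsto_atTop).neg
  refine ⟨integrableOn_Ioi_deriv_of_nonneg' hd hpos ht, ?_⟩
  have := integral_Ioi_of_hasDerivAt_of_nonneg' hd hpos ht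
  simpa using this

lemma diag_sum {n : ℕ} (f : Fin n → ℝ) :
    Matrix.diagonal f = ∑ i, f i • Matrix.single i i (1:ℝ) := by
  ext a b
  simp only [Matrix.diagonal_apply, Matrix.single, Matrix.sum_apply,
    Matrix.smul_apply, Matrix.of_apply, smul_eq_mul, mul_ite, mul_one, mul_zero]
  rcases eq_or_ne a b with h | h
  · subst h
    rw [if_pos rfl, Finset.sum_eq_single a]
    · simp
    · intro c _ hc; simp [hc]
    · simp
  · rw [if_neg h, Finset.sum_eq_zero]
    intro c _
    by_cases hca : c = a
    · subst hca; simp [h]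
    · simp [hca]

/-- For `X` symmetric positive definite, the improper integral
`∫₀^∞ (X + τ Iₙ)⁻¹ (log X) (X + τ Iₙ)⁻¹ dτ` converges and equals `X⁻¹ log X = (log X) X⁻¹`. -/
theorem integral_resolvent_log_resolvent {n : ℕ} (X : Matrix (Fin n) (Fin n) ℝ)
    (hX : X.PosDef) :
    @IntegrableOn _ _ _ _ SeminormedAddGroup.toContinuousENorm
      (fun τ : ℝ => (X + τ • (1 : Matrix (Fin n) (Fin n) ℝ))⁻¹ * matLog X *
        (X + τ • (1 : Matrix (Fin n) (Fin n) ℝ))⁻¹) (Set.Ioi 0) volume ∧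
    (∫ τ in Set.Ioi (0 : ℝ),
        (X + τ • (1 : Matrix (Fin n) (Fin n) ℝ))⁻¹ * matLog X *
          (X + τ • (1 : Matrix (Fin n) (Fin n) ℝ))⁻¹) = X⁻¹ * matLog X ∧
    X⁻¹ * matLog X = matLog X * X⁻¹ := by
  have hH : X.IsHermitian := hX.isHermitian
  set U : Matrix (Fin n) (Fin n) ℝ := (hH.eigenvectorUnitary : Matrix (Fin n) (Fin n) ℝ)
    with hUdef
  set lam : Fin n → ℝ := hH.eigenvalues with hlamdef
  have hlam : ∀ i, 0 < lam i := fun i => hX.eigenvalues_pos i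
  have hUU : star U * U = 1 := Matrix.mem_unitaryGroup_iff'.mp hH.eigenvectorUnitary.2
  have hUU' : U * star U = 1 := Matrix.mem_unitaryGroup_iff.mp hH.eigenvectorUnitary.2
  have hspec : X = U * Matrix.diagonal lam * star U := by
    have := hH.spectral_theorem
    rwa [RCLike.ofReal_real_eq_id, Function.id_comp] at this
  have cancel : ∀ C : Matrix (Fin n) (Fin n) ℝ, star U * (U * C) = C := fun C => by
    rw [← mul_assoc, hUU, one_mul]
  have conj_mul : ∀ A B : Matrix (Fin n) (Fin n) ℝ,
      (U * A * star U) * (U * B * star U) = U * (A * B) * star U := by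
    intro A B; simp only [Matrix.mul_assoc, cancel]
  have conj_inv : ∀ d : Fin n → ℝ, (∀ i, d i ≠ 0) →
      (U * Matrix.diagonal d * star U)⁻¹ = U * Matrix.diagonal (fun i => (d i)⁻¹) * star U := by
    intro d hd
    apply Matrix.inv_eq_right_inv
    rw [conj_mul, Matrix.diagonal_mul_diagonal]
    have : (fun i => d i * (d i)⁻¹) = fun _ => (1:ℝ) := funext fun i => mul_inv_cancel₀ (hd i)
    rw [this, Matrix.diagonal_one, mul_one, hUU']
  have hlog : matLog X = U * Matrix.diagonal (Real.log ∘ lam) * star U := by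
    rw [matLog, matFun, dif_pos hH]
  -- the conjugated standard basis matrices
  set C : Fin n → Matrix (Fin n) (Fin n) ℝ :=
    fun i => U * Matrix.single i i (1:ℝ) * star U with hCdef
  have conj_diag_sum : ∀ f : Fin n → ℝ,
      U * Matrix.diagonal f * star U = ∑ i, f i • C i := by
    intro f
    rw [diag_sum, Matrix.mul_sum, Matrix.sum_mul]
    simp only [mul_smul_comm, smul_mul_assoc]
    rfl
  have conj_diag_congr : ∀ f f' : Fin n → ℝ, (∀ i, f i = f' i) →
      U * Matrix.diagonal f * star U = U * Matrix.diagonal f' * star U := by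
    intro f f' h
    rw [funext h]
  -- the scalar integrands
  set g : Fin n → ℝ → ℝ :=
    fun i τ => Real.log (lam i) * ((lam i + τ)⁻¹ * (lam i + τ)⁻¹) with hgdef
  have hg_int : ∀ i, IntegrableOn (g i) (Set.Ioi 0) volume :=
    fun i => (scalar_int (hlam i)).1.const_mul _
  have hg_val : ∀ i, ∫ τ in Set.Ioi (0:ℝ), g i τ = Real.log (lam i) * (lam i)⁻¹ := by
    intro i
    rw [hgdef]
    rw [MeasureTheory.integral_const_mul, (scalar_int (hlam i)).2]
  -- pointwise identification of the integrand
  have hEq : Set.EqOn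
      (fun τ : ℝ => (X + τ • (1 : Matrix (Fin n) (Fin n) ℝ))⁻¹ * matLog X *
        (X + τ • (1 : Matrix (Fin n) (Fin n) ℝ))⁻¹)
      (fun τ : ℝ => ∑ i, g i τ • C i) (Set.Ioi 0) := by
    intro τ hτ
    have hτ0 : (0:ℝ) < τ := hτ
    have hne : ∀ i, lam i + τ ≠ 0 := fun i => by have := hlam i; positivity
    have hres : X + τ • (1 : Matrix (Fin n) (Fin n) ℝ)
        = U * Matrix.diagonal (fun i => lam i + τ) * star U := by
      have hsm : τ • (1 : Matrix (Fin n) (Fin n) ℝ)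
          = Matrix.diagonal (fun _ => τ) := by
        ext a b
        by_cases h : a = b <;> simp [Matrix.one_apply, Matrix.diagonal_apply, h]
      have hdiag : Matrix.diagonal (fun i => lam i + τ)
          = Matrix.diagonal lam + Matrix.diagonal (fun _ => τ) := by
        rw [Matrix.diagonal_add]
      rw [hspec, hdiag, Matrix.mul_add, Matrix.add_mul, ← hsm]
      congr 1
      rw [mul_smul_comm, smul_mul_assoc, mul_one, hUU']
    have hinv : (X + τ • (1 : Matrix (Fin n) (Fin n) ℝ))⁻¹
        = U * Matrix.diagonal (fun i => (lam i + τ)⁻¹) * star U := by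
      rw [hres]; exact conj_inv _ hne
    show (X + τ • (1 : Matrix (Fin n) (Fin n) ℝ))⁻¹ * matLog X *
        (X + τ • (1 : Matrix (Fin n) (Fin n) ℝ))⁻¹ = ∑ i, g i τ • C i
    rw [hinv, hlog, conj_mul, conj_mul, Matrix.diagonal_mul_diagonal,
      Matrix.diagonal_mul_diagonal, ← conj_diag_sum]
    refine conj_diag_congr _ _ fun i => ?_
    simp only [hgdef, Pi.mul_apply, Function.comp_apply]
    ring
  have hFint : @IntegrableOn _ _ _ _ SeminormedAddGroup.toContinuousENorm (fun τ : ℝ => ∑ i, g i τ • C i) (Set.Ioi 0) volume :=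
    MeasureTheory.integrable_finset_sum _ (fun i _ => (hg_int i).smul_const (C i))
  have hint : @IntegrableOn _ _ _ _ SeminormedAddGroup.toContinuousENorm
      (fun τ : ℝ => (X + τ • (1 : Matrix (Fin n) (Fin n) ℝ))⁻¹ * matLog X *
        (X + τ • (1 : Matrix (Fin n) (Fin n) ℝ))⁻¹) (Set.Ioi 0) volume :=
    hFint.congr_fun (fun τ hτ => (hEq hτ).symm) measurableSet_Ioi
  -- value of the integral
  have hXinv : X⁻¹ = U * Matrix.diagonal (fun i => (lam i)⁻¹) * star U := by
    rw [hspec]; exact conj_inv _ (fun i => (hlam i).ne')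
  have hXinv_log : X⁻¹ * matLog X
      = U * Matrix.diagonal (fun i => (lam i)⁻¹ * Real.log (lam i)) * star U := by
    rw [hXinv, hlog, conj_mul, Matrix.diagonal_mul_diagonal]
    rfl
  have hlog_Xinv : matLog X * X⁻¹
      = U * Matrix.diagonal (fun i => Real.log (lam i) * (lam i)⁻¹) * star U := by
    rw [hXinv, hlog, conj_mul, Matrix.diagonal_mul_diagonal]
    rfl
  have hcomm : X⁻¹ * matLog X = matLog X * X⁻¹ := by
    rw [hXinv_log, hlog_Xinv]
    exact conj_diag_congr _ _ fun i => mul_comm _ _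
  refine ⟨hint, ?_, hcomm⟩
  rw [MeasureTheory.setIntegral_congr_fun measurableSet_Ioi hEq]
  rw [MeasureTheory.integral_finset_sum _ (fun i _ => (hg_int i).smul_const (C i))]
  have : ∀ i ∈ Finset.univ, (∫ τ in Set.Ioi (0:ℝ), g i τ • C i)
      = (Real.log (lam i) * (lam i)⁻¹) • C i := by
    intro i _
    rw [integral_smul_const, hg_val i]
  rw [Finset.sum_congr rfl this, ← conj_diag_sum, hcomm, hlog_Xinv]
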